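/- With C, L/K, G, M as above (End(M) ≅ L, all Galois twists of M isomorphic to M), if for some choice of isomorphisms c_g : M → ᵍM the 2-cocycle ξ(g,h) = c_{gh}^{-1} ∘ ᵍc_h ∘ c_g is a coboundary, then M descends to C: there is an object N of C with Ind_K^L(N) ≅ M. -/
import Mathlib


open CategoryTheory

/-- **Coboundary implies descent.**
Setup: `L/K` finite Galois with group `G`, `C` (the base change `C_L` of a `K`-linear
abelian category `C₀`) carries a strict `G`-action by twisting functors `ρ g`
(`g`-semilinear on Hom-spaces), `Ind : C₀ ⥤ C` is the induction functor, and Galois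
descent holds: every descent datum is effective.  Let `M ∈ C` with `End(M) ≅ L` and
isomorphisms `c g : M ≅ ᵍM` with associated 2-cocycle `ξ`.  If `ξ` is a coboundary
(`ξ(g,h) = ᵍα(h)·α(g)/α(gh)` for some `α : G → L^*`), then `M` is in the essential
image of `Ind`, i.e. `M` descends. -/
theorem coboundary_implies_descent
    (K L : Type*) [Field K] [Field L] [Algebra K L] [IsGalois K L]
    [FiniteDimensional K L]
    (C : Type*) [Category C] [Preadditive C] [Linear L C]
    (ρ : (L ≃ₐ[K] L) → C ⥤ C)
    (hmul : ∀ g h : L ≃ₐ[K] L, ρ (g * h) = ρ h ⋙ ρ g)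
    (hsemi : ∀ (g : L ≃ₐ[K] L) (X Y : C) (f : X ⟶ Y) (a : L),
      (ρ g).map (a • f) = g a • (ρ g).map f)
    (C₀ : Type*) [Category C₀] (Ind : C₀ ⥤ C)
    (hdesc : ∀ (X : C) (dat : ∀ g : L ≃ₐ[K] L, X ≅ (ρ g).obj X),
      (∀ g h : L ≃ₐ[K] L,
        (dat (g * h)).hom =
          (dat g).hom ≫ (ρ g).map (dat h).hom ≫
            eqToHom (show (ρ g).obj ((ρ h).obj X) = (ρ (g * h)).obj X by
              rw [hmul g h]; rfl)) →
      ∃ N : C₀, Nonempty (Ind.obj N ≅ X))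
    (M : C)
    (hEnd : Function.Bijective (fun a : L => a • (𝟙 M)))
    (c : ∀ g : L ≃ₐ[K] L, M ≅ (ρ g).obj M)
    (ξ : (L ≃ₐ[K] L) → (L ≃ₐ[K] L) → L)
    (hξ : ∀ g h : L ≃ₐ[K] L,
      (c g).hom ≫ (ρ g).map (c h).hom ≫
        eqToHom (show (ρ g).obj ((ρ h).obj M) = (ρ (g * h)).obj M by
          rw [hmul g h]; rfl) ≫ (c (g * h)).inv
        = ξ g h • 𝟙 M)
    (α : (L ≃ₐ[K] L) → L) (hα : ∀ g, α g ≠ 0)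
    (hcob : ∀ g h : L ≃ₐ[K] L, ξ g h * α (g * h) = g (α h) * α g) :
    ∃ N : C₀, Nonempty (Ind.obj N ≅ M) := by
  -- modified descent datum: dat g = α g⁻¹ • c g
  set dat : ∀ g : L ≃ₐ[K] L, M ≅ (ρ g).obj M := fun g =>
    { hom := (α g)⁻¹ • (c g).hom
      inv := α g • (c g).inv
      hom_inv_id := by
        rw [Linear.smul_comp, Linear.comp_smul, smul_smul,
          inv_mul_cancel₀ (hα g), one_smul, Iso.hom_inv_id]
      inv_hom_id := by
        rw [Linear.smul_comp, Linear.comp_smul, smul_smul,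
          mul_inv_cancel₀ (hα g), one_smul, Iso.inv_hom_id] } with hdat
  refine hdesc M dat (fun g h => ?_)
  have key : (c g).hom ≫ (ρ g).map (c h).hom ≫
      eqToHom (show (ρ g).obj ((ρ h).obj M) = (ρ (g * h)).obj M by
        rw [hmul g h]; rfl) = ξ g h • (c (g * h)).hom := by
    have := congrArg (· ≫ (c (g * h)).hom) (hξ g h)
    simpa [Category.assoc, Linear.smul_comp] using this
  have hgα : g (α h) ≠ 0 := fun hz => hα h (g.injective (by simp [hz]))
  simp only [hdat, hsemi, map_inv₀, Linear.smul_comp, Linear.comp_smul, smul_smul]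
  rw [key, smul_smul]
  congr 1
  have h1 := hα g
  have h2 := hα (g * h)
  have := hcob g h
  field_simp
  linear_combination -this
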